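/- (Doubling of dependency sets.) Let A = (L_1,...,L_m) be an affine constraint on ℓ variables with L_1(x_1,...,x_ℓ) = x_1, and let A' be the system of 2m affine forms {L_j(x_1,x_2,...,x_ℓ) : j ∈ [m]} ∪ {L_j(x_1,y_2,...,y_ℓ) : j ∈ [m]} in variables x_1,...,x_ℓ,y_2,...,y_ℓ. Let Λ and Λ' be the (d,k)-dependency sets of A and A' respectively. Then |Λ'| = |Λ|² · p^{k+1}. -/

import Mathlib

open scoped BigOperators

noncomputable section

/-- The circle group `𝕋 = ℝ/ℤ`. -/
abbrev 𝕋 : Type := AddCircle (1 : ℝ)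

/-- The character `e(x) = e^{2πix}` on `𝕋`, valued in `ℂ`. -/
def ee (x : 𝕋) : ℂ := (AddCircle.toCircle x : ℂ)

/-- The average `E_{x ∈ α}[f(x)]` of a complex-valued function on a finite type. -/
def cavg {α : Type*} [Fintype α] (f : α → ℂ) : ℂ := (∑ x, f x) / (Fintype.card α : ℂ)

/-- The average of a real-valued function on a finite type. -/
def ravg {α : Type*} [Fintype α] (f : α → ℝ) : ℝ := (∑ x, f x) / (Fintype.card α : ℝ)

/-- Multiplicative derivative `Δ_h f (x) = f(x+h) conj (f x)`. -/
def mDeriv {G : Type*} [Add G] (h : G) (f : G → ℂ) : G → ℂ :=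
  fun x => f (x + h) * (starRingEnd ℂ) (f x)

/-- `E_{h_1,…,h_d,x}[(Δ_{h_1} ⋯ Δ_{h_d} f)(x)]`. -/
def gowersAvg {G : Type*} [AddCommGroup G] [Fintype G] : ℕ → (G → ℂ) → ℂ
  | 0, f => cavg f
  | d + 1, f => cavg fun h => gowersAvg d (mDeriv h f)

/-- The Gowers norm `‖f‖_{U^d} = |E_{h_1,…,h_d,x}[(Δ_{h_1} ⋯ Δ_{h_d} f)(x)]|^{1/2^d}`. -/
def gowersNorm {G : Type*} [AddCommGroup G] [Fintype G] (d : ℕ) (f : G → ℂ) : ℝ :=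
  (‖gowersAvg d f‖) ^ ((1 : ℝ) / 2 ^ d)

/-- Additive derivative `D_h P (x) = P(x+h) - P(x)`. -/
def aDeriv {G M : Type*} [Add G] [Sub M] (h : G) (P : G → M) : G → M :=
  fun x => P (x + h) - P x

/-- Iterated additive derivative `D_{h_1} ⋯ D_{h_k} P`. -/
def iterADeriv {G M : Type*} [AddCommGroup G] [AddCommGroup M] :
    {k : ℕ} → (Fin k → G) → (G → M) → (G → M)
  | 0, _, P => P
  | _ + 1, h, P => aDeriv (h 0) (iterADeriv (Fin.tail h) P)

/-- `P` is a (non-classical) polynomial of degree ≤ `d`: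
all `(d+1)`-fold additive derivatives vanish identically. -/
def IsPolyDeg {G M : Type*} [AddCommGroup G] [AddCommGroup M] (d : ℕ) (P : G → M) : Prop :=
  ∀ (h : Fin (d + 1) → G) (x : G), iterADeriv h P x = 0

/-- `P` has degree exactly `d`. -/
def ExactDeg {G M : Type*} [AddCommGroup G] [AddCommGroup M] (d : ℕ) (P : G → M) : Prop :=
  IsPolyDeg d P ∧ ∀ d' < d, ¬ IsPolyDeg d' P

/-- The degree of a polynomial: the least `d` with `IsPolyDeg d P`. -/
def polyDeg {G M : Type*} [AddCommGroup G] [AddCommGroup M] (P : G → M) : ℕ :=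
  sInf {d | IsPolyDeg d P}

/-- `P` has `d`-rank at most `r`: `P = Γ(Q_1,…,Q_r)` with the `Q_i` of degree ≤ `d-1`. -/
def HasRankLE {G : Type*} [AddCommGroup G] (d : ℕ) (P : G → 𝕋) (r : ℕ) : Prop :=
  ∃ (Q : Fin r → G → 𝕋) (Γ : (Fin r → 𝕋) → 𝕋),
    (∀ i, IsPolyDeg (d - 1) (Q i)) ∧ ∀ x, P x = Γ fun i => Q i x

/-- The `d`-rank of `P`, in `ℕ∞` (`⊤` if no finite decomposition exists;
for `d = 1` this is `⊤` exactly when `P` is non-constant). -/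
def rankd {G : Type*} [AddCommGroup G] (d : ℕ) (P : G → 𝕋) : ℕ∞ :=
  sInf {r : ℕ∞ | ∃ m : ℕ, r = m ∧ HasRankLE d P m}

/-- `P` has depth exactly `k` (shift zero): values in `U_{k+1} = (1/p^{k+1})ℤ/ℤ` but not all
in `U_k`. -/
def ExactDepth {G : Type*} (p k : ℕ) (P : G → 𝕋) : Prop :=
  (∀ x, (p ^ (k + 1)) • P x = 0) ∧ ¬ (∀ x, (p ^ k) • P x = 0)

/-- Application of a linear form `L = (w_t)_t` to a tuple of points of `F_p^n`:
`(x_t)_t ↦ ∑_t w_t x_t`. -/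
def formApply {p : ℕ} {ι : Type*} [Fintype ι] {n : ℕ} (L : ι → ZMod p)
    (x : ι → Fin n → ZMod p) : Fin n → ZMod p := ∑ t, L t • x t

/-- The `(d,k)`-dependency set of a system of forms `L`: the tuples
`(λ_j) ∈ [0, p^{k+1}-1]^m` with `∑_j λ_j P(L_j(x)) ≡ 0` for every non-classical polynomial `P`
of degree `d` and depth `k` (over every `F_p^n`). -/
def DepSet (p k d : ℕ) {ι μ : Type*} [Fintype ι] [Fintype μ]
    (L : μ → ι → ZMod p) : Set (μ → ℕ) :=
  {lam | (∀ j, lam j < p ^ (k + 1)) ∧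
    ∀ (n : ℕ) (P : (Fin n → ZMod p) → 𝕋), ExactDeg d P → ExactDepth p k P →
      ∀ x : ι → Fin n → ZMod p, (∑ j, lam j • P (formApply (L j) x)) = 0}

/-- `b_1,…,b_m ∈ 𝕋^κ` are consistent with the forms `L` with respect to degree data `dd`
and depth data `kk`. -/
def ConsistentWith (p : ℕ) {ι κ : Type*} [Fintype ι] [Fintype κ] {m : ℕ}
    (L : Fin m → ι → ZMod p) (dd kk : κ → ℕ) (b : Fin m → κ → 𝕋) : Prop :=
  ∀ i : κ, (∀ j, (p ^ (kk i + 1)) • b j i = 0) ∧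
    ∀ lam ∈ DepSet p (kk i) (dd i) L, (∑ j, lam j • b j i) = 0

/-- The polynomial factor defined by `P_1,…,P_C` with depths `k_1,…,k_C` has rank greater
than `r`: every integer combination `∑ λ_i P_i`, with the `λ_i` not all divisible by the
respective `p^{k_i+1}`, has `D`-rank > `r` where `D = max_i deg(λ_i P_i)`. -/
def FactorRankGT (p : ℕ) {G : Type*} [AddCommGroup G] {C : ℕ}
    (P : Fin C → G → 𝕋) (k : Fin C → ℕ) (r : ℕ) : Prop :=
  ∀ lam : Fin C → ℤ, (∃ i, ¬ ((p : ℤ) ^ (k i + 1) ∣ lam i)) →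
    (r : ℕ∞) < rankd (Finset.univ.sup fun i => polyDeg fun x => lam i • P i x)
      (fun x => ∑ i, lam i • P i x)

/-- Cauchy–Schwarz complexity ≤ `d`: for each `i`, the remaining forms can be partitioned into
`d+1` classes, with `L_i` outside the linear span of each class. -/
def CSComplexityLE (p : ℕ) {m : ℕ} {ι : Type*} [Fintype ι] (d : ℕ)
    (L : Fin m → ι → ZMod p) : Prop :=
  ∀ i, ∃ c : Fin m → Fin (d + 1), ∀ t,
    L i ∉ Submodule.span (ZMod p) {v | ∃ j, j ≠ i ∧ c j = t ∧ v = L j}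



set_option linter.unusedSectionVars false

def tau (N : ℕ) : ℤ →+ 𝕋 where
  toFun n := (((n : ℝ) / (N : ℝ) : ℝ) : 𝕋)
  map_zero' := by norm_num
  map_add' a b := by
    show ((((a + b : ℤ) : ℝ) / (N:ℝ) : ℝ) : 𝕋) = (((a:ℝ)/(N:ℝ) : ℝ) : 𝕋) + (((b:ℝ)/(N:ℝ) : ℝ) : 𝕋)
    have h : ((a + b : ℤ) : ℝ) / N = (a : ℝ) / N + (b : ℝ) / N := by push_cast; ring
    rw [h]; rfl

lemma tau_apply (N : ℕ) (n : ℤ) : tau N n = (((n : ℝ) / (N : ℝ) : ℝ) : 𝕋) := rfl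

lemma tau_eq_zero_of_dvd {N : ℕ} {n : ℤ} (h : (N : ℤ) ∣ n) : tau N n = 0 := by
  obtain ⟨m, rfl⟩ := h
  rw [tau_apply]
  rcases Nat.eq_zero_or_pos N with h0 | h0
  · subst h0; norm_num
  have h2 : ((N * m : ℤ) : ℝ) / N = (m : ℝ) := by
    have : (N : ℝ) ≠ 0 := by positivity
    field_simp
    exact_mod_cast (Int.cast_mul _ _ : (((N:ℤ) * m : ℤ) : ℝ) = _)
  rw [h2]
  refine (QuotientAddGroup.eq_zero_iff _).mpr ?_
  exact AddSubgroup.mem_zmultiples_iff.mpr ⟨m, by simp⟩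

lemma tau_congr {N : ℕ} {x y : ℤ} (h : (N : ℤ) ∣ (x - y)) : tau N x = tau N y := by
  have h2 := tau_eq_zero_of_dvd (N := N) h
  rw [map_sub, sub_eq_zero] at h2
  exact h2

lemma tau_ne_zero {N : ℕ} (hN : 0 < N) {n : ℤ} (h : ¬ (N : ℤ) ∣ n) : tau N n ≠ 0 := by
  intro h0
  apply h
  rw [tau_apply] at h0
  have h1 := (QuotientAddGroup.eq_zero_iff _).mp h0
  obtain ⟨m, hm⟩ := AddSubgroup.mem_zmultiples_iff.mp h1
  refine ⟨m, ?_⟩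
  have hN' : (N : ℝ) ≠ 0 := by positivity
  have h3 : (m : ℝ) * 1 = (n:ℝ)/N := by rw [← zsmul_eq_mul]; exact_mod_cast hm
  rw [mul_one, eq_div_iff hN'] at h3
  exact_mod_cast (by linarith [h3] : (n:ℝ) = (N:ℝ) * (m:ℝ))

lemma exists_tau_rep {N : ℕ} (hN : 0 < N) (v : 𝕋) (hv : N • v = 0) : ∃ n : ℤ, v = tau N n := by
  obtain ⟨r, rfl⟩ := QuotientAddGroup.mk_surjective v
  have h1 : ((N • r : ℝ) : 𝕋) = 0 := by rw [← hv]; rfl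
  have h2 := (QuotientAddGroup.eq_zero_iff _).mp h1
  obtain ⟨m, hm⟩ := AddSubgroup.mem_zmultiples_iff.mp h2
  refine ⟨m, ?_⟩
  have hN' : (N : ℝ) ≠ 0 := by positivity
  have h3 : (m : ℝ) * 1 = (N : ℝ) * r := by
    rw [← zsmul_eq_mul]
    rw [show ((N:ℝ) * r) = (N:ℕ) • r by rw [nsmul_eq_mul]]
    exact_mod_cast hm
  have hr : r = (m : ℝ) / N := by
    rw [eq_div_iff hN']; linarith [h3]
  rw [tau_apply, ← hr]

lemma nsmul_tau (a N : ℕ) (n : ℤ) : a • tau N n = tau N (a * n) := by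
  rw [← natCast_zsmul, ← map_zsmul]
  norm_num

lemma tau_shift {p : ℕ} (j : ℕ) (hp : 0 < p) (t : ℤ) : tau (p^(j+1)) (p * t) = tau (p^j) t := by
  rw [tau_apply, tau_apply]
  congr 1
  have h1 : (p:ℝ) ≠ 0 := by positivity
  push_cast
  field_simp
  ring


section helpers
variable {G M : Type*} [AddCommGroup G] [AddCommGroup M]

lemma iterADeriv_zero (f : G → M) (h : Fin 0 → G) : iterADeriv h f = f := rfl

lemma iterADeriv_succ {s : ℕ} (h : Fin (s+1) → G) (f : G → M) :
    iterADeriv h f = aDeriv (h 0) (iterADeriv (Fin.tail h) f) := rfl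

lemma aDeriv_comm (a b : G) (f : G → M) : aDeriv a (aDeriv b f) = aDeriv b (aDeriv a f) := by
  funext x
  simp only [aDeriv]
  rw [add_right_comm x b a]
  abel

lemma tail_snoc {n : ℕ} (g : Fin (n+1) → G) (c : G) :
    Fin.tail (Fin.snoc g c : Fin (n+2) → G) = Fin.snoc (Fin.tail g) c := by
  funext i
  simp only [Fin.tail]
  refine Fin.lastCases ?_ (fun j => ?_) i
  · rw [Fin.succ_last, Fin.snoc_last, Fin.snoc_last]
  · rw [Fin.succ_castSucc, Fin.snoc_castSucc, Fin.snoc_castSucc]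
    rfl

lemma iterADeriv_snoc : ∀ {n : ℕ} (g : Fin n → G) (c : G) (f : G → M),
    iterADeriv (Fin.snoc g c) f = iterADeriv g (aDeriv c f)
  | 0, g, c, f => by
      rw [iterADeriv_succ, iterADeriv_zero]
      have h0 : (Fin.snoc g c : Fin 1 → G) 0 = c := by
        simp [Fin.snoc]
      rw [h0]
      rfl
  | n+1, g, c, f => by
      rw [iterADeriv_succ, tail_snoc, iterADeriv_snoc (Fin.tail g) c, iterADeriv_succ]
      have h0 : (Fin.snoc g c : Fin (n+2) → G) 0 = g 0 := by
        have : (0 : Fin (n+2)) = Fin.castSucc 0 := rfl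
        rw [this, Fin.snoc_castSucc]
      rw [h0]

lemma isPolyDeg_of_deriv {s : ℕ} {f : G → M} (h : ∀ c, IsPolyDeg s (aDeriv c f)) :
    IsPolyDeg (s+1) f := by
  intro g x
  rw [show g = Fin.snoc (Fin.init g) (g (Fin.last (s+1))) from (Fin.snoc_init_self g).symm,
    iterADeriv_snoc]
  exact h _ _ _

lemma deriv_of_isPolyDeg {s : ℕ} {f : G → M} (h : IsPolyDeg (s+1) f) (c : G) :
    IsPolyDeg s (aDeriv c f) := by
  intro g x
  rw [← iterADeriv_snoc]
  exact h _ _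

lemma isPolyDeg_succ {s : ℕ} {f : G → M} (h : IsPolyDeg s f) : IsPolyDeg (s+1) f := by
  intro g x
  rw [iterADeriv_succ]
  have hz : iterADeriv (Fin.tail g) f = fun _ => 0 := funext fun y => h _ y
  show aDeriv (g 0) (iterADeriv (Fin.tail g) f) x = 0
  rw [hz]
  simp [aDeriv]

lemma isPolyDeg_mono {s t : ℕ} (hst : s ≤ t) {f : G → M} (h : IsPolyDeg s f) : IsPolyDeg t f := by
  induction t with
  | zero => exact (Nat.le_zero.mp hst) ▸ h
  | succ t ih =>
    rcases Nat.lt_or_ge s (t+1) with h1 | h1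
    · exact isPolyDeg_succ (ih (Nat.lt_succ_iff.mp h1))
    · exact (Nat.le_antisymm hst h1) ▸ h

lemma iterADeriv_add : ∀ {s : ℕ} (h : Fin s → G) (f g : G → M),
    iterADeriv h (fun x => f x + g x) = fun x => iterADeriv h f x + iterADeriv h g x
  | 0, h, f, g => rfl
  | s+1, h, f, g => by
      rw [iterADeriv_succ, iterADeriv_add (Fin.tail h) f g, iterADeriv_succ, iterADeriv_succ]
      funext x
      simp only [aDeriv]
      abel

lemma isPolyDeg_add {s : ℕ} {f g : G → M} (hf : IsPolyDeg s f) (hg : IsPolyDeg s g) :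
    IsPolyDeg s (fun x => f x + g x) := by
  intro h x
  rw [iterADeriv_add]
  show iterADeriv h f x + iterADeriv h g x = 0
  rw [hf, hg, add_zero]

lemma iterADeriv_zero_fn : ∀ {s : ℕ} (h : Fin s → G),
    iterADeriv h (fun _ : G => (0:M)) = fun _ => 0
  | 0, h => rfl
  | s+1, h => by
      rw [iterADeriv_succ, iterADeriv_zero_fn (Fin.tail h)]
      funext x; simp [aDeriv]

lemma isPolyDeg_zero_fn (s : ℕ) : IsPolyDeg s (fun _ : G => (0:M)) := by
  intro h x; rw [iterADeriv_zero_fn]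

lemma isPolyDeg_const (s : ℕ) (c : M) : IsPolyDeg s (fun _ : G => c) := by
  refine isPolyDeg_mono (Nat.zero_le s) ?_
  intro h x
  rw [iterADeriv_succ, iterADeriv_zero]
  simp [aDeriv]

lemma isPolyDeg_sum {s : ℕ} {ι : Type*} (T : Finset ι) (f : ι → G → M)
    (h : ∀ i ∈ T, IsPolyDeg s (f i)) : IsPolyDeg s (fun x => ∑ i ∈ T, f i x) := by
  classical
  induction T using Finset.induction with
  | empty => simpa using isPolyDeg_zero_fn s
  | @insert a T' hi ih =>
    have : (fun x => ∑ i ∈ insert a T', f i x) = fun x => f a x + ∑ i ∈ T', f i x := by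
      funext x; rw [Finset.sum_insert hi]
    rw [this]
    exact isPolyDeg_add (h a (Finset.mem_insert_self a T'))
      (ih fun i hi' => h i (Finset.mem_insert_of_mem hi'))

lemma iterADeriv_addHom {M' : Type*} [AddCommGroup M'] (φ : M →+ M') :
    ∀ {s : ℕ} (h : Fin s → G) (f : G → M),
    iterADeriv h (fun x => φ (f x)) = fun x => φ (iterADeriv h f x)
  | 0, h, f => rfl
  | s+1, h, f => by
      rw [iterADeriv_succ, iterADeriv_addHom φ (Fin.tail h) f, iterADeriv_succ]
      funext x
      simp [aDeriv, map_sub]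

lemma iterADeriv_comp_addHom {G' : Type*} [AddCommGroup G'] (π : G' →+ G) :
    ∀ {s : ℕ} (h : Fin s → G') (f : G → M),
    iterADeriv h (fun x => f (π x)) = fun x => iterADeriv (fun i => π (h i)) f (π x)
  | 0, h, f => rfl
  | s+1, h, f => by
      rw [iterADeriv_succ]
      have ht : Fin.tail (fun i => π (h i)) = fun i => π (Fin.tail h i) := rfl
      rw [iterADeriv_succ (fun i => π (h i)) f, ht]
      funext x
      simp only [aDeriv, iterADeriv_comp_addHom π (Fin.tail h) f, map_add]

lemma iterADeriv_outer_zero {s : ℕ} (h : Fin (s+1) → G) (f : G → M) (x : G)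
    (h0 : h 0 = 0) : iterADeriv h f x = 0 := by
  rw [iterADeriv_succ]
  show aDeriv (h 0) _ x = 0
  rw [h0]
  simp [aDeriv]

lemma iterADeriv_mul {R : Type*} [CommRing R] (c : R) :
    ∀ {s : ℕ} (h : Fin s → G) (f : G → R),
    iterADeriv h (fun x => c * f x) = fun x => c * iterADeriv h f x
  | 0, h, f => rfl
  | s+1, h, f => by
      rw [iterADeriv_succ, iterADeriv_mul c (Fin.tail h) f, iterADeriv_succ]
      funext x
      simp only [aDeriv]
      ring

lemma isPolyDeg_mul {R : Type*} [CommRing R] (c : R) {s : ℕ} {f : G → R}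
    (h : IsPolyDeg s f) : IsPolyDeg s (fun x => c * f x) := by
  intro g x
  rw [iterADeriv_mul]
  show c * iterADeriv g f x = 0
  rw [h, mul_zero]
end helpers


section ST
variable {p : ℕ} [Fact p.Prime]

lemma pp_pos : 0 < p := (Fact.out : p.Prime).pos
lemma pp_one_lt : 1 < p := (Fact.out : p.Prime).one_lt

lemma natDegree_shift_sub (F : Polynomial ℤ) (c : ℤ) {e : ℕ} (he : F.natDegree ≤ e + 1) :
    (F.comp (Polynomial.X + Polynomial.C c) - F).natDegree ≤ e := by
  by_cases h0 : F.natDegree = 0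
  · have hC := Polynomial.eq_C_of_natDegree_le_zero (le_of_eq h0)
    rw [hC]
    simp
  have hF0 : F ≠ 0 := fun h => h0 (by simp [h])
  have hq : (Polynomial.X + Polynomial.C c : Polynomial ℤ).natDegree = 1 :=
    Polynomial.natDegree_X_add_C c
  have hcompdeg : (F.comp (Polynomial.X + Polynomial.C c)).natDegree = F.natDegree := by
    rw [Polynomial.natDegree_comp, hq, mul_one]
  have hlc : (F.comp (Polynomial.X + Polynomial.C c)).leadingCoeff = F.leadingCoeff := by
    rw [Polynomial.leadingCoeff_comp (by rw [hq]; norm_num), Polynomial.leadingCoeff_X_add_C,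
      one_pow, mul_one]
  have hcomp0 : F.comp (Polynomial.X + Polynomial.C c) ≠ 0 := by
    intro h
    apply hF0
    have := hlc
    rw [h] at this
    simp at this
    exact Polynomial.leadingCoeff_eq_zero.mp this.symm
  have hdeq : (F.comp (Polynomial.X + Polynomial.C c)).degree = F.degree := by
    rw [Polynomial.degree_eq_natDegree hcomp0, Polynomial.degree_eq_natDegree hF0, hcompdeg]
  by_cases hz : F.comp (Polynomial.X + Polynomial.C c) - F = 0
  · rw [hz]; simp
  have hlt := Polynomial.degree_sub_lt hdeq hcomp0 hlc
  rw [Polynomial.degree_eq_natDegree hcomp0, hcompdeg] at hlt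
  have := (Polynomial.natDegree_lt_iff_degree_lt hz).mpr hlt
  omega

lemma Tlem (j : ℕ)
    (hS : ∀ g : ZMod p → 𝕋, (∀ x, p ^ j • g x = 0) → IsPolyDeg (j * (p - 1)) g) :
    ∀ (e : ℕ) (F : Polynomial ℤ), F.natDegree ≤ e →
      IsPolyDeg (e + j * (p - 1)) (fun x : ZMod p => tau (p ^ (j + 1)) (F.eval (x.val : ℤ))) := by
  intro e
  induction e with
  | zero =>
    intro F hF
    have hC := Polynomial.eq_C_of_natDegree_le_zero hF
    have : (fun x : ZMod p => tau (p ^ (j + 1)) (F.eval (x.val : ℤ)))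
        = fun _ : ZMod p => tau (p ^ (j + 1)) (F.coeff 0) := by
      funext x
      rw [hC]
      simp
    rw [this, Nat.zero_add]
    exact isPolyDeg_const _ _
  | succ e ih =>
    intro F hF
    have harith : e + 1 + j * (p - 1) = (e + j * (p - 1)) + 1 := by ring
    rw [harith]
    apply isPolyDeg_of_deriv
    intro c
    -- the divisibility bookkeeping
    have hvadd : ∀ x : ZMod p, ((x + c).val : ℤ) = ((x.val : ℤ) + (c.val : ℤ)) % p := by
      intro x
      rw [ZMod.val_add]
      push_cast
      ring_nf
    have hdvd : ∀ x : ZMod p,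
        (p : ℤ) ∣ F.eval ((x + c).val : ℤ) - F.eval ((x.val : ℤ) + (c.val : ℤ)) := by
      intro x
      refine dvd_trans ?_ (Polynomial.sub_dvd_eval_sub _ _ F)
      rw [hvadd x]
      refine ⟨-(( (x.val : ℤ) + (c.val : ℤ)) / p), ?_⟩
      rw [Int.emod_def]
      ring
    set R : ZMod p → ℤ :=
      fun x => (F.eval ((x + c).val : ℤ) - F.eval ((x.val : ℤ) + (c.val : ℤ))) / p with hRdef
    have hR : ∀ x, (p : ℤ) * R x
        = F.eval ((x + c).val : ℤ) - F.eval ((x.val : ℤ) + (c.val : ℤ)) :=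
      fun x => Int.mul_ediv_cancel' (hdvd x)
    set Gp : Polynomial ℤ := F.comp (Polynomial.X + Polynomial.C (c.val : ℤ)) - F with hGpdef
    have hGpeval : ∀ x : ZMod p,
        Gp.eval ((x.val : ℤ)) = F.eval ((x.val : ℤ) + (c.val : ℤ)) - F.eval ((x.val : ℤ)) := by
      intro x
      rw [hGpdef, Polynomial.eval_sub, Polynomial.eval_comp, Polynomial.eval_add,
        Polynomial.eval_X, Polynomial.eval_C]
    have key : aDeriv c (fun x : ZMod p => tau (p ^ (j + 1)) (F.eval (x.val : ℤ)))
        = fun x => tau (p ^ (j + 1)) (Gp.eval ((x.val : ℤ))) + tau (p ^ j) (R x) := by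
      funext x
      show tau (p ^ (j + 1)) (F.eval ((x + c).val : ℤ)) - tau (p ^ (j + 1)) (F.eval (x.val : ℤ))
        = _
      rw [← tau_shift j pp_pos (R x), ← map_add, ← map_sub]
      congr 1
      rw [hGpeval x]
      have := hR x
      linarith [this]
    rw [key]
    apply isPolyDeg_add
    · exact ih Gp (natDegree_shift_sub F _ hF)
    · refine isPolyDeg_mono (Nat.le_add_left _ _) ?_
      apply hS
      intro x
      rw [nsmul_tau]
      apply tau_eq_zero_of_dvd
      push_cast
      exact Dvd.intro _ rfl

lemma Slem : ∀ (j : ℕ) (f : ZMod p → 𝕋), (∀ x, p ^ j • f x = 0) → IsPolyDeg (j * (p - 1)) f := by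
  intro j
  induction j with
  | zero =>
    intro f hf
    have : f = fun _ => 0 := by
      funext x
      have := hf x
      simpa using this
    rw [this, Nat.zero_mul]
    exact isPolyDeg_zero_fn 0
  | succ j ih =>
    intro f hf
    have hN : 0 < p ^ (j + 1) := pow_pos pp_pos _
    choose n hn using fun x => exists_tau_rep hN (f x) (hf x)
    set r : ZMod p → ZMod p := fun x => ((n x : ℤ) : ZMod p) with hrdef
    set Gp : Polynomial (ZMod p) := Lagrange.interpolate Finset.univ id r with hGpdef
    have hinj : Set.InjOn id ((Finset.univ : Finset (ZMod p)) : Set (ZMod p)) :=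
      fun a _ b _ h => h
    have hGdeg : Gp.degree < (p : ℕ) := by
      have h1 := Lagrange.degree_interpolate_lt (v := id) (r := r) hinj
      rwa [Finset.card_univ, ZMod.card p] at h1
    have hGnat : Gp.natDegree ≤ p - 1 := by
      by_cases h0 : Gp = 0
      · rw [h0]; simp
      have := (Polynomial.natDegree_lt_iff_degree_lt h0).mpr hGdeg
      have := pp_one_lt (p := p)
      omega
    set F : Polynomial ℤ :=
      ∑ i ∈ Finset.range p, Polynomial.C ((Gp.coeff i).val : ℤ) * Polynomial.X ^ i with hFdef
    have hFdeg : F.natDegree ≤ p - 1 := by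
      rw [hFdef]
      refine Polynomial.natDegree_sum_le_of_forall_le _ _ ?_
      intro i hi
      refine le_trans Polynomial.natDegree_mul_le ?_
      rw [Polynomial.natDegree_C, Polynomial.natDegree_X_pow]
      have : i < p := Finset.mem_range.mp hi
      omega
    have hvcast : ∀ x : ZMod p, ((x.val : ℤ) : ZMod p) = x := by
      intro x
      push_cast
      rw [ZMod.natCast_val, ZMod.cast_id]
    have hFeval : ∀ x : ZMod p, ((F.eval (x.val : ℤ) : ℤ) : ZMod p) = Gp.eval x := by
      intro x
      rw [hFdef, Polynomial.eval_finset_sum]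
      have hnode : Gp.eval x = r x := by
        have h2 := Lagrange.eval_interpolate_at_node (r := r) hinj (Finset.mem_univ x)
        simpa [hGpdef] using h2
      have hGev : Gp.eval x = ∑ i ∈ Finset.range p, Gp.coeff i * x ^ i := by
        apply Polynomial.eval_eq_sum_range'
        have := pp_one_lt (p := p)
        omega
      rw [hGev]
      push_cast
      apply Finset.sum_congr rfl
      intro i _
      simp only [Polynomial.eval_mul, Polynomial.eval_C, Polynomial.eval_pow, Polynomial.eval_X]
      push_cast
      rw [show ((x.val : ℕ) : ZMod p) = x from by rw [ZMod.natCast_val, ZMod.cast_id],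
        show (((Gp.coeff i).val : ℕ) : ZMod p) = Gp.coeff i from by
          rw [ZMod.natCast_val, ZMod.cast_id]]
    have hkey : ∀ x : ZMod p, (p : ℤ) ∣ (n x - F.eval (x.val : ℤ)) := by
      intro x
      rw [← ZMod.intCast_zmod_eq_zero_iff_dvd]
      push_cast
      rw [hFeval x]
      have hnode : Gp.eval x = r x := by
        have h2 := Lagrange.eval_interpolate_at_node (r := r) hinj (Finset.mem_univ x)
        simpa [hGpdef] using h2
      rw [hnode, hrdef]
      push_cast
      ring
    set q : ZMod p → ℤ := fun x => (n x - F.eval (x.val : ℤ)) / p with hqdef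
    have hq : ∀ x, (p : ℤ) * q x = n x - F.eval (x.val : ℤ) :=
      fun x => Int.mul_ediv_cancel' (hkey x)
    have hsplit : f = fun x => tau (p ^ (j + 1)) (F.eval (x.val : ℤ)) + tau (p ^ j) (q x) := by
      funext x
      rw [hn x, ← tau_shift j pp_pos (q x), ← map_add]
      congr 1
      rw [hq x]
      ring
    rw [hsplit]
    have harith : (j + 1) * (p - 1) = (p - 1) + j * (p - 1) := by ring
    rw [harith]
    apply isPolyDeg_add
    · exact Tlem j ih (p - 1) F hFdeg
    · refine isPolyDeg_mono (Nat.le_add_left _ _) ?_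
      apply ih
      intro x
      rw [nsmul_tau]
      apply tau_eq_zero_of_dvd
      push_cast
      exact Dvd.intro _ rfl

end ST


section prodlemmas
variable {p : ℕ} [Fact p.Prime]

lemma prod_isPolyDeg (n : ℕ) : ∀ (s : ℕ) (S : Finset (Fin n)), S.card ≤ s →
    IsPolyDeg s (fun x : Fin n → ZMod p => ∏ i ∈ S, x i) := by
  intro s
  induction s with
  | zero =>
    intro S hS
    have hSe : S = ∅ := Finset.card_eq_zero.mp (Nat.le_zero.mp hS)
    subst hSe
    have : (fun x : Fin n → ZMod p => ∏ i ∈ (∅ : Finset (Fin n)), x i)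
        = fun _ => (1 : ZMod p) := by
      funext x; simp
    rw [this]
    intro h x
    rw [iterADeriv_succ, iterADeriv_zero]
    simp [aDeriv]
  | succ s ih =>
    intro S hS
    apply isPolyDeg_of_deriv
    intro c
    have hderiv : aDeriv c (fun x : Fin n → ZMod p => ∏ i ∈ S, x i)
        = fun x => ∑ T ∈ S.powerset.erase ∅, (∏ i ∈ T, c i) * ∏ i ∈ S \ T, x i := by
      funext x
      show (∏ i ∈ S, (x + c) i) - ∏ i ∈ S, x i = _
      have h1 : ∀ i ∈ S, (x + c) i = c i + x i := by
        intro i _; simp [Pi.add_apply]; ring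
      rw [Finset.prod_congr rfl h1, Finset.prod_add]
      rw [← Finset.sum_erase_add _ _ (Finset.empty_mem_powerset S)]
      simp [Finset.sdiff_empty]
    rw [hderiv]
    apply isPolyDeg_sum
    intro T hT
    apply isPolyDeg_mul
    have hT' := Finset.mem_erase.mp hT
    have hsub : T ⊆ S := Finset.mem_powerset.mp hT'.2
    have hTpos : 0 < T.card := Finset.card_pos.mpr (Finset.nonempty_of_ne_empty hT'.1)
    apply ih
    have := Finset.card_sdiff_of_subset hsub
    have := Finset.card_le_card hsub
    omega

lemma deriv_prod_emb (n : ℕ) : ∀ (s : ℕ) (emb : Fin s → Fin n), Function.Injective emb →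
    ∀ x : Fin n → ZMod p,
      iterADeriv (fun i => fun t => if t = emb i then (1 : ZMod p) else 0)
        (fun y : Fin n → ZMod p => ∏ i, y (emb i)) x = 1 := by
  intro s
  induction s with
  | zero =>
    intro emb _ x
    rw [iterADeriv_zero]
    simp
  | succ s ih =>
    intro emb hinj x
    set h : Fin (s + 1) → (Fin n → ZMod p) :=
      fun i => fun t => if t = emb i then (1 : ZMod p) else 0 with hhdef
    rw [show h = Fin.snoc (Fin.init h) (h (Fin.last s)) from (Fin.snoc_init_self h).symm,
      iterADeriv_snoc]
    have hd : aDeriv (h (Fin.last s)) (fun y : Fin n → ZMod p => ∏ i, y (emb i))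
        = fun y => ∏ i : Fin s, y (emb i.castSucc) := by
      funext y
      show (∏ i : Fin (s+1), (y + h (Fin.last s)) (emb i)) - ∏ i, y (emb i) = _
      have h1 : ∀ i : Fin (s+1), (y + h (Fin.last s)) (emb i)
          = y (emb i) + (if i = Fin.last s then 1 else 0) := by
        intro i
        simp only [Pi.add_apply, hhdef]
        congr 1
        exact if_congr (hinj.eq_iff) rfl rfl
      rw [Fintype.prod_congr _ _ h1, Fin.prod_univ_castSucc, Fin.prod_univ_castSucc
        (f := fun i : Fin (s+1) => y (emb i))]
      have h2 : ∀ i : Fin s, (if i.castSucc = Fin.last s then (1:ZMod p) else 0) = 0 := by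
        intro i
        rw [if_neg (Fin.castSucc_lt_last i).ne]
      have h3 : ∀ i : Fin s, y (emb i.castSucc) + (if i.castSucc = Fin.last s then (1:ZMod p) else 0)
          = y (emb i.castSucc) := by
        intro i; rw [h2 i, add_zero]
      rw [Fintype.prod_congr _ _ h3, if_pos rfl]
      ring
    rw [hd]
    have hinit : Fin.init h = fun i => fun t => if t = emb i.castSucc then (1:ZMod p) else 0 := by
      funext i t
      simp [Fin.init, hhdef]
    rw [hinit]
    exact ih (fun i => emb i.castSucc) (hinj.comp (Fin.castSucc_injective s)) x

end prodlemmas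

def iota (p : ℕ) [NeZero p] : ZMod p →+ 𝕋 where
  toFun c := tau p (c.val : ℤ)
  map_zero' := by
    show tau p (((0 : ZMod p).val : ℤ)) = 0
    have h0 : ((0 : ZMod p).val : ℤ) = 0 := by simp [ZMod.val_zero]
    rw [h0, map_zero]
  map_add' a b := by
    show tau p (((a + b).val : ℤ)) = tau p ((a.val : ℤ)) + tau p ((b.val : ℤ))
    rw [← map_add]
    apply tau_congr
    rw [ZMod.val_add]
    push_cast
    refine ⟨-(((a.val : ℤ) + (b.val : ℤ)) / p), ?_⟩
    rw [Int.emod_def]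
    ring

section witness
variable {p : ℕ} [Fact p.Prime]

lemma iota_apply (c : ZMod p) : iota p c = tau p (c.val : ℤ) := rfl

lemma nsmul_iota (a : ℕ) (c : ZMod p) : a • iota p c = tau p (a * (c.val : ℤ)) := by
  rw [iota_apply, nsmul_tau]

lemma exists_witness (d k : ℕ) (hdk : k * (p - 1) < d) :
    ∃ (n : ℕ) (P : (Fin n → ZMod p) → 𝕋), ExactDeg d P ∧ ExactDepth p k P := by
  haveI : Fact (1 < p) := ⟨pp_one_lt⟩
  obtain ⟨d', rfl⟩ : ∃ d', d = d' + 1 := ⟨d - 1, by omega⟩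
  set n := d' + 2 with hn
  set φ : ZMod p → 𝕋 := fun y => tau (p ^ (k + 1)) ((y.val : ℤ)) with hφ
  set π0 : (Fin n → ZMod p) →+ ZMod p := Pi.evalAddMonoidHom (fun _ => ZMod p) 0 with hπ0
  set M : (Fin n → ZMod p) → ZMod p := fun x => ∏ i : Fin (d' + 1), x i.succ with hM
  set P : (Fin n → ZMod p) → 𝕋 := fun x => φ (π0 x) + iota p (M x) with hP
  have hφdeg : IsPolyDeg (1 + k * (p - 1)) φ := by
    have h1 := Tlem (p := p) k (Slem (p := p) k) 1 Polynomial.X Polynomial.natDegree_X_le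
    have h2 : (fun x : ZMod p => tau (p ^ (k + 1)) (Polynomial.X.eval (x.val : ℤ))) = φ := by
      funext x; rw [hφ]; simp
    rwa [h2] at h1
  have hP1deg : IsPolyDeg (d' + 1) (fun x : Fin n → ZMod p => φ (π0 x)) := by
    refine isPolyDeg_mono (by omega : 1 + k * (p - 1) ≤ d' + 1) ?_
    intro h x
    rw [iterADeriv_comp_addHom π0 h φ]
    exact hφdeg _ _
  have hMdeg : IsPolyDeg (d' + 1) M := by
    have h1 := prod_isPolyDeg (p := p) n (d' + 1) (Finset.image Fin.succ Finset.univ)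
      (by rw [Finset.card_image_of_injective _ (Fin.succ_injective (d' + 1)),
          Finset.card_univ, Fintype.card_fin])
    have h2 : (fun x : Fin n → ZMod p => ∏ i ∈ Finset.image Fin.succ Finset.univ, x i) = M := by
      funext x
      rw [hM, Finset.prod_image (fun a _ b _ hab => Fin.succ_injective _ hab)]
    rwa [h2] at h1
  have hP2deg : IsPolyDeg (d' + 1) (fun x : Fin n → ZMod p => iota p (M x)) := by
    intro h x
    rw [iterADeriv_addHom (iota p) h M]
    show iota p (iterADeriv h M x) = 0
    rw [hMdeg h x, map_zero]
  have hPdeg : IsPolyDeg (d' + 1) P := by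
    rw [hP]
    exact isPolyDeg_add hP1deg hP2deg
  have hval1 : ((1 : ZMod p).val : ℤ) = 1 := by
    rw [ZMod.val_one p]
    norm_num
  refine ⟨n, P, ⟨hPdeg, ?_⟩, ?_, ?_⟩
  · -- exact degree: no smaller degree
    intro d'' hlt hPoly
    have h2 : IsPolyDeg d' P := isPolyDeg_mono (by omega) hPoly
    set hdir : Fin (d' + 1) → (Fin n → ZMod p) :=
      fun i => fun t => if t = i.succ then (1 : ZMod p) else 0 with hhdir
    have hzero := h2 hdir 0
    have hsplit : iterADeriv hdir P = fun x =>
        iterADeriv hdir (fun x => φ (π0 x)) x + iterADeriv hdir (fun x => iota p (M x)) x := by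
      rw [hP]
      exact iterADeriv_add hdir _ _
    rw [hsplit] at hzero
    have hpart1 : iterADeriv hdir (fun x : Fin n → ZMod p => φ (π0 x)) 0 = 0 := by
      rw [iterADeriv_comp_addHom π0 hdir φ]
      apply iterADeriv_outer_zero
      show π0 (hdir 0) = 0
      have : ∀ t : Fin n, hdir 0 t = if t = (0 : Fin (d' + 1)).succ then (1:ZMod p) else 0 :=
        fun t => rfl
      show hdir 0 0 = 0
      rw [this 0, if_neg (Fin.succ_ne_zero _).symm]
    have hpart2 : iterADeriv hdir (fun x : Fin n → ZMod p => iota p (M x)) 0 = iota p 1 := by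
      rw [iterADeriv_addHom (iota p) hdir M]
      show iota p (iterADeriv hdir M 0) = iota p 1
      congr 1
      have h3 := deriv_prod_emb (p := p) n (d' + 1) Fin.succ (Fin.succ_injective _) 0
      exact h3
    simp only [hpart1, hpart2, zero_add] at hzero
    have : iota p (1 : ZMod p) ≠ 0 := by
      rw [iota_apply, hval1]
      apply tau_ne_zero pp_pos
      intro hdvd
      have := Int.le_of_dvd one_pos hdvd
      have := pp_one_lt (p := p)
      omega
    exact this hzero
  · -- depth: killed by p^(k+1)
    intro x
    rw [hP, smul_add]
    have h1 : p ^ (k + 1) • φ (π0 x) = 0 := by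
      rw [hφ, nsmul_tau]
      apply tau_eq_zero_of_dvd
      push_cast
      exact Dvd.intro _ rfl
    have h2 : p ^ (k + 1) • iota p (M x) = 0 := by
      rw [nsmul_iota]
      apply tau_eq_zero_of_dvd
      push_cast
      exact Dvd.dvd.mul_right (dvd_pow_self (p : ℤ) (Nat.succ_ne_zero k)) _
    rw [h1, h2, add_zero]
  · -- not killed by p^k
    intro hall
    set e0 : Fin n → ZMod p := fun t => if t = 0 then 1 else 0 with he0
    have hMe0 : M e0 = 0 := by
      rw [hM]
      refine Finset.prod_eq_zero (Finset.mem_univ (0 : Fin (d' + 1))) ?_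
      show (if (0 : Fin (d' + 1)).succ = (0 : Fin n) then (1 : ZMod p) else 0) = 0
      rw [if_neg (Fin.succ_ne_zero _)]
    have hπ0e0 : π0 e0 = 1 := by
      show e0 0 = 1
      rw [he0]
      simp
    have hPe0 : P e0 = tau (p ^ (k + 1)) 1 := by
      rw [hP]
      show φ (π0 e0) + iota p (M e0) = _
      rw [hπ0e0, hMe0, map_zero, add_zero, hφ]
      show tau (p ^ (k + 1)) (((1 : ZMod p).val : ℤ)) = _
      rw [hval1]
    have := hall e0
    rw [hPe0, nsmul_tau, mul_one] at this
    have hne : ¬ ((p ^ (k + 1) : ℕ) : ℤ) ∣ ((p ^ k : ℕ) : ℤ) := by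
      rw [Int.natCast_dvd_natCast]
      intro hdvd
      have h4 := Nat.le_of_dvd (pow_pos pp_pos k) hdvd
      have h5 : (p : ℕ) ^ k < p ^ (k + 1) := by
        apply Nat.pow_lt_pow_succ
        exact pp_one_lt
      omega
    exact tau_ne_zero (pow_pos pp_pos _) (by exact_mod_cast hne) this

end witness
section counting

lemma order_dvd_lemma {p : ℕ} (hp : p.Prime) {k : ℕ} {v : 𝕋}
    (hv1 : p ^ (k + 1) • v = 0) (hv2 : ¬ p ^ k • v = 0) {A : ℕ} (hA : A • v = 0) :
    p ^ (k + 1) ∣ A := by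
  have ho : addOrderOf v ∣ p ^ (k + 1) := addOrderOf_dvd_of_nsmul_eq_zero hv1
  obtain ⟨i, hik, hoi⟩ := (Nat.dvd_prime_pow hp).mp ho
  have hie : i = k + 1 := by
    by_contra hne
    exact hv2 (addOrderOf_dvd_iff_nsmul_eq_zero.mp
      (by rw [hoi]; exact pow_dvd_pow p (by omega)))
  rw [← hie, ← hoi]
  exact addOrderOf_dvd_iff_nsmul_eq_zero.mpr hA

lemma mod_nsmul_lemma {v : 𝕋} {N : ℕ} (hv : N • v = 0) (a : ℕ) : (a % N) • v = a • v := by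
  conv_rhs => rw [← Nat.mod_add_div a N]
  rw [add_nsmul, mul_nsmul, hv]
  simp

lemma mod_cancel1 {N a : ℕ} (s : ℕ) (hN : 0 < N) (ha : a < N) :
    ((a + s) % N + (N - s % N)) % N = a := by
  have h1 : ((a + s) % N + (N - s % N)) % N = (a + s + (N - s % N)) % N :=
    Nat.ModEq.add_right _ (Nat.mod_modEq _ _)
  have h2 : a + s + (N - s % N) = a + N * (s / N + 1) := by
    have h3 := Nat.div_add_mod s N
    have h4 : s % N < N := Nat.mod_lt _ hN
    have h5 : N * (s / N + 1) = N * (s / N) + N := by ring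
    omega
  rw [h1, h2, Nat.add_mul_mod_self_left, Nat.mod_eq_of_lt ha]

lemma mod_cancel2 {N b : ℕ} (s s' : ℕ) (hb : b < N) (hdvd : N ∣ s' + s) :
    ((b + s') % N + s % N) % N = b := by
  have h1 : ((b + s') % N + s % N) % N = (b + s' + s) % N :=
    Nat.ModEq.add (Nat.mod_modEq _ _) (Nat.mod_modEq _ _)
  obtain ⟨c, hc⟩ := hdvd
  have h2 : b + s' + s = b + N * c := by omega
  rw [h1, h2, Nat.add_mul_mod_self_left, Nat.mod_eq_of_lt hb]

lemma mod_inj_t {N t t' : ℕ} (ht : t < N) (ht' : t' < N) (c : ℕ)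
    (h : (c + (N - t)) % N = (c + (N - t')) % N) : t = t' := by
  have h1 : (N - t) % N = (N - t') % N := Nat.ModEq.add_left_cancel' c h
  rcases Nat.eq_zero_or_pos t with rfl | htpos <;>
    rcases Nat.eq_zero_or_pos t' with rfl | ht'pos
  · rfl
  · rw [Nat.sub_zero, Nat.mod_self, Nat.mod_eq_of_lt (by omega)] at h1
    omega
  · rw [Nat.sub_zero, Nat.mod_self, Nat.mod_eq_of_lt (by omega)] at h1
    omega
  · rw [Nat.mod_eq_of_lt (by omega), Nat.mod_eq_of_lt (by omega)] at h1
    omega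

lemma mod_inj_b {N b b' t : ℕ} (hb : b < N) (hb' : b' < N)
    (h : (b + t) % N = (b' + t) % N) : b = b' := by
  have h1 : b % N = b' % N := Nat.ModEq.add_right_cancel' t h
  rw [Nat.mod_eq_of_lt hb, Nat.mod_eq_of_lt hb'] at h1
  exact h1

end counting

section forms
variable {p : ℕ} [Fact p.Prime] {ℓ n : ℕ}

lemma formApply_point (w : Fin (ℓ + 1) → ZMod p) (hw : w 0 = 1) (a : Fin n → ZMod p) :
    formApply w (fun t => if t = 0 then a else 0) = a := by
  unfold formApply
  rw [Fin.sum_univ_succ]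
  simp [hw, Fin.succ_ne_zero]

lemma formApply_L0 (w : Fin (ℓ + 1) → ZMod p)
    (hw : ∀ t, w t = if t = 0 then (1 : ZMod p) else 0)
    (x : Fin (ℓ + 1) → Fin n → ZMod p) : formApply w x = x 0 := by
  unfold formApply
  rw [Fin.sum_univ_succ]
  simp [hw, Fin.succ_ne_zero]

lemma formApply_inl (w : Fin (ℓ + 1) → ZMod p)
    (xt : (Fin (ℓ + 1) ⊕ Fin (ℓ + 1)) → Fin n → ZMod p) :
    formApply (Sum.elim w (fun _ : Fin (ℓ + 1) => (0 : ZMod p))) xt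
      = formApply w (fun t => xt (Sum.inl t)) := by
  unfold formApply
  rw [Fintype.sum_sum_type]
  simp

lemma formApply_inr (w : Fin (ℓ + 1) → ZMod p) (hw : w 0 = 1)
    (xt : (Fin (ℓ + 1) ⊕ Fin (ℓ + 1)) → Fin n → ZMod p) :
    formApply (Sum.elim (fun t : Fin (ℓ + 1) => if t = 0 then (1 : ZMod p) else 0)
        (fun t : Fin (ℓ + 1) => if t = 0 then (0 : ZMod p) else w t)) xt
      = formApply w (fun t => if t = 0 then xt (Sum.inl 0) else xt (Sum.inr t)) := by
  unfold formApply
  rw [Fintype.sum_sum_type]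
  rw [Fin.sum_univ_succ (f := fun t => Sum.elim (fun t : Fin (ℓ + 1) => if t = 0 then (1 : ZMod p) else 0)
        (fun t : Fin (ℓ + 1) => if t = 0 then (0 : ZMod p) else w t) (Sum.inl t) • xt (Sum.inl t)),
      Fin.sum_univ_succ (f := fun t => Sum.elim (fun t : Fin (ℓ + 1) => if t = 0 then (1 : ZMod p) else 0)
        (fun t : Fin (ℓ + 1) => if t = 0 then (0 : ZMod p) else w t) (Sum.inr t) • xt (Sum.inr t)),
      Fin.sum_univ_succ (f := fun t => w t • (if t = 0 then xt (Sum.inl 0) else xt (Sum.inr t)))]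
  simp [hw, Fin.succ_ne_zero]

lemma sum_update_eq {m : ℕ} (lam : Fin (m + 1) → ℕ) (c : ℕ) (g : Fin (m + 1) → 𝕋) :
    ∑ j, (Function.update lam 0 c) j • g j
      = c • g 0 + ((∑ j, lam j • g j) - lam 0 • g 0) := by
  rw [Fin.sum_univ_succ (f := fun j => (Function.update lam 0 c) j • g j),
    Fin.sum_univ_succ (f := fun j => lam j • g j), Function.update_self]
  have hupd : (∑ j : Fin m, (Function.update lam 0 c) j.succ • g j.succ)
      = ∑ j : Fin m, lam j.succ • g j.succ := by
    apply Finset.sum_congr rfl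
    intro j _
    rw [Function.update_of_ne (Fin.succ_ne_zero j) c lam]
  rw [hupd]
  abel
end forms

/-- Doubling of dependency sets: if `A = (L_1,…,L_m)` is a system of affine
forms with `L_1(x) = x_1`, and `A'` is the doubled system
`{L_j(x_1,x_2,…,x_ℓ)} ∪ {L_j(x_1,y_2,…,y_ℓ)}`, then `|Λ'| = |Λ|² · p^{k+1}`. -/
theorem dependency_set_doubling (p : ℕ) [Fact p.Prime] (ℓ m d k : ℕ)
    (hdk : k * (p - 1) < d)
    (L : Fin (m + 1) → Fin (ℓ + 1) → ZMod p)
    (haff : ∀ j, L j 0 = 1)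
    (hL0 : ∀ t, L 0 t = if t = 0 then 1 else 0) :
    Set.ncard (DepSet p k d
        (Sum.elim
          (fun j : Fin (m + 1) => Sum.elim (L j) (fun _ : Fin (ℓ + 1) => (0 : ZMod p)))
          (fun j : Fin (m + 1) => Sum.elim
            (fun t : Fin (ℓ + 1) => if t = 0 then (1 : ZMod p) else 0)
            (fun t : Fin (ℓ + 1) => if t = 0 then (0 : ZMod p) else L j t))))
      = (Set.ncard (DepSet p k d L)) ^ 2 * p ^ (k + 1) := by
  classical
  have hp : p.Prime := Fact.out
  set N := p ^ (k + 1) with hNdef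
  have hN : 0 < N := pow_pos hp.pos _
  obtain ⟨n₀, P₀, hdeg₀, hdepth₀⟩ := exists_witness (p := p) d k hdk
  obtain ⟨a₀, ha₀⟩ : ∃ a, ¬ p ^ k • P₀ a = 0 := by
    by_contra hcon
    push_neg at hcon
    exact hdepth₀.2 fun x => hcon x
  have hcrux : ∀ A : ℕ, A • P₀ a₀ = 0 → N ∣ A := fun A hA =>
    order_dvd_lemma hp (hdepth₀.1 a₀) ha₀ hA
  set Lf := Sum.elim
      (fun j : Fin (m + 1) => Sum.elim (L j) (fun _ : Fin (ℓ + 1) => (0 : ZMod p)))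
      (fun j : Fin (m + 1) => Sum.elim
        (fun t : Fin (ℓ + 1) => if t = 0 then (1 : ZMod p) else 0)
        (fun t : Fin (ℓ + 1) => if t = 0 then (0 : ZMod p) else L j t)) with hLf
  have hexp : ∀ (lam' : Fin (m + 1) ⊕ Fin (m + 1) → ℕ) (n : ℕ)
      (P : (Fin n → ZMod p) → 𝕋) (xt : (Fin (ℓ + 1) ⊕ Fin (ℓ + 1)) → Fin n → ZMod p),
      (∑ j', lam' j' • P (formApply (Lf j') xt))
        = (∑ j, lam' (Sum.inl j) • P (formApply (L j) (fun t => xt (Sum.inl t))))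
          + ∑ j, lam' (Sum.inr j) •
              P (formApply (L j) (fun t => if t = 0 then xt (Sum.inl 0) else xt (Sum.inr t))) := by
    intro lam' n P xt
    rw [Fintype.sum_sum_type]
    congr 1
    · refine Finset.sum_congr rfl fun j _ => ?_
      rw [show Lf (Sum.inl j) = Sum.elim (L j) (fun _ : Fin (ℓ + 1) => (0 : ZMod p)) from rfl,
        formApply_inl]
    · refine Finset.sum_congr rfl fun j _ => ?_
      rw [show Lf (Sum.inr j) = Sum.elim
          (fun t : Fin (ℓ + 1) => if t = 0 then (1 : ZMod p) else 0)
          (fun t : Fin (ℓ + 1) => if t = 0 then (0 : ZMod p) else L j t) from rfl,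
        formApply_inr (L j) (haff j)]
  have hB : ∀ lam' ∈ DepSet p k d Lf, ∀ (n : ℕ) (P : (Fin n → ZMod p) → 𝕋),
      ExactDeg d P → ExactDepth p k P → ∀ x : Fin (ℓ + 1) → Fin n → ZMod p,
      (∑ j, lam' (Sum.inl j) • P (formApply (L j) x))
        + (∑ j, lam' (Sum.inr j)) • P (x 0) = 0 := by
    intro lam' hmem n P hdeg hdep x
    have h1 : (∑ j, lam' (Sum.inl j) • P (formApply (L j) x))
        + (∑ j, lam' (Sum.inr j) •
            P (formApply (L j) (fun t => if t = 0 then x 0 else 0))) = 0 := by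
      have h0 := hmem.2 n P hdeg hdep (Sum.elim x fun _ => 0)
      rw [hexp] at h0
      exact h0
    have h2 : (∑ j, lam' (Sum.inr j)) • P (x 0)
        = ∑ j, lam' (Sum.inr j) • P (formApply (L j) (fun t => if t = 0 then x 0 else 0)) := by
      rw [Finset.sum_smul]
      refine Finset.sum_congr rfl fun j _ => ?_
      rw [formApply_point (L j) (haff j)]
    rw [h2]
    exact h1
  have hC : ∀ lam' ∈ DepSet p k d Lf, ∀ (n : ℕ) (P : (Fin n → ZMod p) → 𝕋),
      ExactDeg d P → ExactDepth p k P → ∀ y : Fin (ℓ + 1) → Fin n → ZMod p,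
      (∑ j, lam' (Sum.inl j)) • P (y 0)
        + (∑ j, lam' (Sum.inr j) • P (formApply (L j) y)) = 0 := by
    intro lam' hmem n P hdeg hdep y
    have h1 : (∑ j, lam' (Sum.inl j) • P (formApply (L j) (fun t => if t = 0 then y 0 else 0)))
        + (∑ j, lam' (Sum.inr j) • P (formApply (L j)
            (fun t : Fin (ℓ + 1) =>
              if t = 0 then (if (0 : Fin (ℓ + 1)) = 0 then y 0 else 0) else y t))) = 0 := by
      have h0 := hmem.2 n P hdeg hdep (Sum.elim (fun t => if t = 0 then y 0 else 0) y)
      rw [hexp] at h0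
      exact h0
    rw [show (fun t : Fin (ℓ + 1) =>
          if t = 0 then (if (0 : Fin (ℓ + 1)) = 0 then y 0 else (0 : Fin n → ZMod p)) else y t)
        = y from by funext t; by_cases ht : t = 0 <;> simp [ht]] at h1
    have h2 : (∑ j, lam' (Sum.inl j)) • P (y 0)
        = ∑ j, lam' (Sum.inl j) • P (formApply (L j) (fun t => if t = 0 then y 0 else 0)) := by
      rw [Finset.sum_smul]
      refine Finset.sum_congr rfl fun j _ => ?_
      rw [formApply_point (L j) (haff j)]
    rw [h2]
    exact h1
  have hpt : ∀ j : Fin (m + 1), formApply (L j) (fun t => if t = 0 then a₀ else 0) = a₀ :=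
    fun j => formApply_point (L j) (haff j) a₀
  have hD : ∀ lam' ∈ DepSet p k d Lf,
      N ∣ ((∑ j, lam' (Sum.inl j)) + ∑ j, lam' (Sum.inr j)) := by
    intro lam' hmem
    apply hcrux
    have h1 : (∑ j, lam' (Sum.inl j) • P₀ (formApply (L j) (fun t => if t = 0 then a₀ else 0)))
        + (∑ j, lam' (Sum.inr j)) • P₀ (if (0 : Fin (ℓ + 1)) = 0 then a₀ else 0) = 0 :=
      hB lam' hmem n₀ P₀ hdeg₀ hdepth₀ _
    rw [if_pos rfl] at h1
    have h2 : (∑ j, lam' (Sum.inl j) • P₀ (formApply (L j) (fun t => if t = 0 then a₀ else 0)))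
        = (∑ j, lam' (Sum.inl j)) • P₀ a₀ := by
      rw [Finset.sum_smul]
      exact Finset.sum_congr rfl fun j _ => by rw [hpt j]
    rw [h2] at h1
    rw [add_nsmul]
    exact h1
  -- (E) : members of Λ agreeing away from 0 are equal
  have hE : ∀ a ∈ DepSet p k d L, ∀ b ∈ DepSet p k d L,
      (∀ j : Fin m, a j.succ = b j.succ) → a = b := by
    have key : ∀ a ∈ DepSet p k d L, ∀ b ∈ DepSet p k d L,
        (∀ j : Fin m, a j.succ = b j.succ) → b 0 ≤ a 0 → a 0 = b 0 := by
      intro a ha b hb hab hle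
      have h1 := ha.2 n₀ P₀ hdeg₀ hdepth₀ (fun t => if t = 0 then a₀ else 0)
      have h2 := hb.2 n₀ P₀ hdeg₀ hdepth₀ (fun t => if t = 0 then a₀ else 0)
      simp only [hpt] at h1 h2
      rw [Fin.sum_univ_succ] at h1 h2
      have h4 : (∑ j : Fin m, a j.succ • P₀ a₀) = ∑ j : Fin m, b j.succ • P₀ a₀ :=
        Finset.sum_congr rfl fun j _ => by rw [hab j]
      rw [h4] at h1
      have h5 : a 0 • P₀ a₀ = b 0 • P₀ a₀ := by
        have h7 : a 0 • P₀ a₀ - b 0 • P₀ a₀ = 0 := by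
          calc a 0 • P₀ a₀ - b 0 • P₀ a₀
              = (a 0 • P₀ a₀ + ∑ j : Fin m, b j.succ • P₀ a₀)
                - (b 0 • P₀ a₀ + ∑ j : Fin m, b j.succ • P₀ a₀) := by abel
            _ = 0 - 0 := by rw [h1, h2]
            _ = 0 := by abel
        exact sub_eq_zero.mp h7
      have h8 : (a 0 - b 0) • P₀ a₀ = 0 := by
        rw [sub_nsmul _ hle, h5]
        abel
      have h9 := hcrux _ h8
      have h10 : a 0 < N := ha.1 0
      have h11 := Nat.eq_zero_of_dvd_of_lt h9 (by omega)
      omega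
    intro a ha b hb hab
    rcases le_total (b 0) (a 0) with hle | hle
    · have h0 := key a ha b hb hab hle
      funext j
      rcases Fin.eq_zero_or_eq_succ j with rfl | ⟨i, rfl⟩
      exacts [h0, hab i]
    · have h0 := key b hb a ha (fun j => (hab j).symm) hle
      funext j
      rcases Fin.eq_zero_or_eq_succ j with rfl | ⟨i, rfl⟩
      exacts [h0.symm, hab i]
  -- the bijection
  set Phi : ((Fin (m + 1) → ℕ) × (Fin (m + 1) → ℕ)) × ℕ → (Fin (m + 1) ⊕ Fin (m + 1) → ℕ) :=
    fun q => Sum.elim (Function.update q.1.1 0 ((q.1.1 0 + (N - q.2)) % N))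
      (Function.update q.1.2 0 ((q.1.2 0 + q.2) % N)) with hPhi
  set Dom : Set (((Fin (m + 1) → ℕ) × (Fin (m + 1) → ℕ)) × ℕ) :=
    (DepSet p k d L ×ˢ DepSet p k d L) ×ˢ Set.Iio N with hDom
  have hmaps : ∀ q ∈ Dom, Phi q ∈ DepSet p k d Lf := by
    rintro ⟨⟨lam, mu⟩, t⟩ ⟨⟨hlam, hmu⟩, ht⟩
    have ht' : t < N := ht
    constructor
    · intro j'
      rcases j' with j | j
      · show Function.update lam 0 ((lam 0 + (N - t)) % N) j < N
        rcases Fin.eq_zero_or_eq_succ j with rfl | ⟨i, rfl⟩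
        · rw [Function.update_self]; exact Nat.mod_lt _ hN
        · rw [Function.update_of_ne (Fin.succ_ne_zero i)]; exact hlam.1 _
      · show Function.update mu 0 ((mu 0 + t) % N) j < N
        rcases Fin.eq_zero_or_eq_succ j with rfl | ⟨i, rfl⟩
        · rw [Function.update_self]; exact Nat.mod_lt _ hN
        · rw [Function.update_of_ne (Fin.succ_ne_zero i)]; exact hmu.1 _
    · intro n P hdeg hdep xt
      rw [hexp]
      set v : 𝕋 := P (xt (Sum.inl 0)) with hv
      have hv0 : N • v = 0 := hdep.1 _
      have hA0 : formApply (L 0) (fun t => xt (Sum.inl t)) = xt (Sum.inl 0) :=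
        formApply_L0 (L 0) hL0 _
      have hblock1 : (∑ j, Phi ((lam, mu), t) (Sum.inl j)
            • P (formApply (L j) (fun t => xt (Sum.inl t)))) = (N - t) • v := by
        have e1 : (∑ j, Phi ((lam, mu), t) (Sum.inl j)
              • P (formApply (L j) (fun t => xt (Sum.inl t))))
            = ∑ j, (Function.update lam 0 ((lam 0 + (N - t)) % N)) j
              • P (formApply (L j) (fun t => xt (Sum.inl t))) := rfl
        rw [e1, sum_update_eq, hlam.2 n P hdeg hdep (fun t => xt (Sum.inl t)), hA0, ← hv]
        rw [mod_nsmul_lemma hv0, add_nsmul]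
        abel
      have hblock2 : (∑ j, Phi ((lam, mu), t) (Sum.inr j) • P (formApply (L j)
            (fun s => if s = 0 then xt (Sum.inl 0) else xt (Sum.inr s)))) = t • v := by
        have e1 : (∑ j, Phi ((lam, mu), t) (Sum.inr j) • P (formApply (L j)
              (fun s => if s = 0 then xt (Sum.inl 0) else xt (Sum.inr s))))
            = ∑ j, (Function.update mu 0 ((mu 0 + t) % N)) j • P (formApply (L j)
              (fun s => if s = 0 then xt (Sum.inl 0) else xt (Sum.inr s))) := rfl
        have hB0 : formApply (L 0) (fun s : Fin (ℓ + 1) =>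
            if s = 0 then xt (Sum.inl 0) else xt (Sum.inr s)) = xt (Sum.inl 0) := by
          rw [formApply_L0 (L 0) hL0]
          simp
        rw [e1, sum_update_eq,
          hmu.2 n P hdeg hdep (fun s => if s = 0 then xt (Sum.inl 0) else xt (Sum.inr s)),
          hB0, ← hv]
        rw [mod_nsmul_lemma hv0, add_nsmul]
        abel
      rw [hblock1, hblock2, ← add_nsmul, Nat.sub_add_cancel (le_of_lt ht'), hv0]
  have hinj : Set.InjOn Phi Dom := by
    rintro ⟨⟨lam, mu⟩, t⟩ ⟨⟨hlam, hmu⟩, ht⟩ ⟨⟨lam', mu'⟩, t'⟩ ⟨⟨hlam', hmu'⟩, ht'⟩ heq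
    have ht2 : t < N := ht
    have ht2' : t' < N := ht'
    have hlamtail : ∀ j : Fin m, lam j.succ = lam' j.succ := by
      intro j
      have := congrFun heq (Sum.inl j.succ)
      simp only [hPhi, Sum.elim_inl, Sum.elim_inr, Function.update_of_ne (Fin.succ_ne_zero j)] at this; exact this
    have hmutail : ∀ j : Fin m, mu j.succ = mu' j.succ := by
      intro j
      have := congrFun heq (Sum.inr j.succ)
      simp only [hPhi, Sum.elim_inl, Sum.elim_inr, Function.update_of_ne (Fin.succ_ne_zero j)] at this; exact this
    have hlameq : lam = lam' := hE lam hlam lam' hlam' hlamtail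
    have hmueq : mu = mu' := by
      apply hE mu hmu mu' hmu' hmutail
    subst hlameq
    have h0 : (lam 0 + (N - t)) % N = (lam 0 + (N - t')) % N := by
      have := congrFun heq (Sum.inl 0)
      simp only [hPhi, Sum.elim_inl, Sum.elim_inr, Function.update_self] at this; exact this
    have hteq : t = t' := mod_inj_t ht2 ht2' (lam 0) h0
    subst hteq
    have h1 : (mu 0 + t) % N = (mu' 0 + t) % N := by
      have := congrFun heq (Sum.inr 0)
      simp only [hPhi, Sum.elim_inl, Sum.elim_inr, Function.update_self] at this; exact this
    have hmu0 : mu 0 = mu' 0 := by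
      apply mod_inj_b (hmu.1 0) (hmu'.1 0)
      rw [Nat.add_comm (mu 0) t, Nat.add_comm (mu' 0) t] at h1 ⊢
      exact h1
    have : mu = mu' := by
      funext j
      rcases Fin.eq_zero_or_eq_succ j with rfl | ⟨i, rfl⟩
      exacts [hmu0, hmutail i]
    rw [this]
  have hsurj : Set.SurjOn Phi Dom (DepSet p k d Lf) := by
    intro lam' hmem
    set s : ℕ := ∑ j, lam' (Sum.inr j) with hs
    set s' : ℕ := ∑ j, lam' (Sum.inl j) with hs'
    set lam : Fin (m + 1) → ℕ :=
      Function.update (fun j => lam' (Sum.inl j)) 0 ((lam' (Sum.inl 0) + s) % N) with hlamdef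
    set mu : Fin (m + 1) → ℕ :=
      Function.update (fun j => lam' (Sum.inr j)) 0 ((lam' (Sum.inr 0) + s') % N) with hmudef
    have hlam : lam ∈ DepSet p k d L := by
      constructor
      · intro j
        rcases Fin.eq_zero_or_eq_succ j with rfl | ⟨i, rfl⟩
        · rw [hlamdef, Function.update_self]; exact Nat.mod_lt _ hN
        · rw [hlamdef, Function.update_of_ne (Fin.succ_ne_zero i)]; exact hmem.1 _
      · intro n P hdeg hdep x
        rw [hlamdef, sum_update_eq]
        have hA0 : formApply (L 0) x = x 0 := formApply_L0 (L 0) hL0 x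
        have hv0 : N • P (x 0) = 0 := hdep.1 _
        rw [hA0, mod_nsmul_lemma hv0, add_nsmul]
        have hBx := hB lam' hmem n P hdeg hdep x
        rw [← hs] at hBx
        calc lam' (Sum.inl 0) • P (x 0) + s • P (x 0)
              + ((∑ j, lam' (Sum.inl j) • P (formApply (L j) x)) - lam' (Sum.inl 0) • P (x 0))
            = (∑ j, lam' (Sum.inl j) • P (formApply (L j) x)) + s • P (x 0) := by abel
          _ = 0 := hBx
    have hmu : mu ∈ DepSet p k d L := by
      constructor
      · intro j
        rcases Fin.eq_zero_or_eq_succ j with rfl | ⟨i, rfl⟩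
        · rw [hmudef, Function.update_self]; exact Nat.mod_lt _ hN
        · rw [hmudef, Function.update_of_ne (Fin.succ_ne_zero i)]; exact hmem.1 _
      · intro n P hdeg hdep y
        rw [hmudef, sum_update_eq]
        have hA0 : formApply (L 0) y = y 0 := formApply_L0 (L 0) hL0 y
        have hv0 : N • P (y 0) = 0 := hdep.1 _
        rw [hA0, mod_nsmul_lemma hv0, add_nsmul]
        have hCy := hC lam' hmem n P hdeg hdep y
        rw [← hs'] at hCy
        calc lam' (Sum.inr 0) • P (y 0) + s' • P (y 0)
              + ((∑ j, lam' (Sum.inr j) • P (formApply (L j) y)) - lam' (Sum.inr 0) • P (y 0))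
            = s' • P (y 0) + (∑ j, lam' (Sum.inr j) • P (formApply (L j) y)) := by abel
          _ = 0 := hCy
    refine ⟨((lam, mu), s % N), ⟨⟨hlam, hmu⟩, ?_⟩, ?_⟩
    · exact Nat.mod_lt _ hN
    · have hdvd : N ∣ s' + s := by
        have := hD lam' hmem
        rw [← hs, ← hs'] at this
        exact this
      funext j'
      rcases j' with j | j
      · show Function.update lam 0 ((lam 0 + (N - s % N)) % N) j = lam' (Sum.inl j)
        rcases Fin.eq_zero_or_eq_succ j with rfl | ⟨i, rfl⟩
        · rw [Function.update_self, hlamdef, Function.update_self]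
          exact mod_cancel1 s hN (hmem.1 (Sum.inl 0))
        · rw [Function.update_of_ne (Fin.succ_ne_zero i), hlamdef,
            Function.update_of_ne (Fin.succ_ne_zero i)]
      · show Function.update mu 0 ((mu 0 + s % N) % N) j = lam' (Sum.inr j)
        rcases Fin.eq_zero_or_eq_succ j with rfl | ⟨i, rfl⟩
        · rw [Function.update_self, hmudef, Function.update_self]
          exact mod_cancel2 s s' (hmem.1 (Sum.inr 0)) hdvd
        · rw [Function.update_of_ne (Fin.succ_ne_zero i), hmudef,
            Function.update_of_ne (Fin.succ_ne_zero i)]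
  have hbij : Set.BijOn Phi Dom (DepSet p k d Lf) := ⟨hmaps, hinj, hsurj⟩
  rw [← Set.BijOn.image_eq hbij, Set.ncard_image_of_injOn hinj]
  have hprod : ∀ {α β : Type} (A : Set α) (B : Set β), (A ×ˢ B).ncard = A.ncard * B.ncard := by
    intro α β A B
    rw [← Nat.card_coe_set_eq, ← Nat.card_coe_set_eq, ← Nat.card_coe_set_eq,
      Nat.card_congr (Equiv.Set.prod A B), Nat.card_prod]
  rw [hDom, hprod, hprod]
  have hIio : (Set.Iio N).ncard = N := by
    rw [← Finset.coe_Iio, Set.ncard_coe_finset, Nat.card_Iio]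
  rw [hIio]
  ring

end
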